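/- Let A be an artin algebra with Jacobson radical J, and suppose every module P(i)J (the radical of the indecomposable projective P(i)) lies in add(⊕_{j=1}^m A/J^j), where m is the Loewy length of A. Then for every i and every 1 ≤ j ≤ m, the module P(i)J/P(i)J^j also lies in add(⊕_{j=1}^m A/J^j). In particular, if P(i)J ≅ P(k)/P(k)J^l, then P(i)J/P(i)J^j ≅ P(k)/P(k)J^j. -/

import Mathlib

/-- The Jacobson radical of a ring `A`. -/
def jacobsonRad (A : Type) [Ring A] : Ideal A := Ideal.jacobson ⊥

/-- The submodule `I • N` (span of products), valid over noncommutative rings. -/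
def smulSub {A : Type} [Ring A] (I : Ideal A) {M : Type} [AddCommGroup M] [Module A M]
    (N : Submodule A M) : Submodule A M :=
  Submodule.span A {x | ∃ a ∈ I, ∃ y ∈ N, x = a • y}

/-- `radPow A M n` is the submodule `M J(A)^n` (written for left modules: `J(A)^n M`). -/
def radPow (A : Type) [Ring A] (M : Type) [AddCommGroup M] [Module A M] : ℕ → Submodule A M
  | 0 => ⊤
  | n + 1 => smulSub (jacobsonRad A) (radPow A M n)

lemma radPow_succ_le (A : Type) [Ring A] (M : Type) [AddCommGroup M] [Module A M] (n : ℕ) :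
    radPow A M (n + 1) ≤ radPow A M n := by
  show smulSub (jacobsonRad A) (radPow A M n) ≤ radPow A M n
  rw [smulSub, Submodule.span_le]
  rintro x ⟨a, _, y, hy, rfl⟩
  exact Submodule.smul_mem _ a hy

lemma radPow_le_one (A : Type) [Ring A] (M : Type) [AddCommGroup M] [Module A M]
    {j : ℕ} (hj : 1 ≤ j) : radPow A M j ≤ radPow A M 1 := by
  induction j with
  | zero => omega
  | succ n ih =>
    rcases Nat.lt_or_ge 1 (n+1) with h | h
    · exact le_trans (radPow_succ_le A M n) (ih (by omega))
    · have : n + 1 = 1 := by omega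
      rw [this]

/-- `X` belongs to `add M`: it is a direct summand of a finite direct sum of copies of `M`. -/
def InAdd (A : Type) [Ring A] (M : Type) [AddCommGroup M] [Module A M]
    (X : Type) [AddCommGroup X] [Module A X] : Prop :=
  ∃ (n : ℕ) (Y : Type) (_ : AddCommGroup Y) (_ : Module A Y),
    Nonempty ((X × Y) ≃ₗ[A] (Fin n → M))

/-- `f` lies in the Jacobson radical of the category of `A`-modules. -/
def IsRadMor (A : Type) [Ring A] {M N : Type} [AddCommGroup M] [Module A M]
    [AddCommGroup N] [Module A N] (f : M →ₗ[A] N) : Prop :=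
  ∀ g : N →ₗ[A] M, IsUnit ((1 : Module.End A M) - (g ∘ₗ f : Module.End A M))

/-- The ADR module `⊕_{j=1}^m A/J^j`. -/
abbrev ADRModule (A : Type) [Ring A] (m : ℕ) : Type :=
  ∀ j : Fin m, A ⧸ radPow A A (j.1 + 1)

section AuxStmt3

open Function

variable {A : Type} [Ring A]

lemma smulSub_mono {M : Type} [AddCommGroup M] [Module A M] (I : Ideal A)
    {p q : Submodule A M} (h : p ≤ q) : smulSub I p ≤ smulSub I q := by
  apply Submodule.span_mono
  rintro x ⟨a, ha, y, hy, rfl⟩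
  exact ⟨a, ha, y, h hy, rfl⟩

lemma smulSub_map {M N : Type} [AddCommGroup M] [Module A M] [AddCommGroup N] [Module A N]
    (I : Ideal A) (f : M →ₗ[A] N) (p : Submodule A M) :
    Submodule.map f (smulSub I p) = smulSub I (Submodule.map f p) := by
  rw [smulSub, smulSub, Submodule.map_span]
  congr 1
  ext x
  constructor
  · rintro ⟨y, ⟨a, ha, z, hz, rfl⟩, rfl⟩
    exact ⟨a, ha, f z, ⟨z, hz, rfl⟩, (f.map_smul a z :)⟩
  · rintro ⟨a, ha, y, ⟨z, hz, rfl⟩, rfl⟩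
    exact ⟨a • z, ⟨a, ha, z, hz, rfl⟩, (f.map_smul a z :)⟩

lemma radPow_map_le {M N : Type} [AddCommGroup M] [Module A M] [AddCommGroup N] [Module A N]
    (f : M →ₗ[A] N) (j : ℕ) : Submodule.map f (radPow A M j) ≤ radPow A N j := by
  induction j with
  | zero => exact le_top
  | succ n ih =>
    show Submodule.map f (smulSub _ _) ≤ smulSub _ _
    rw [smulSub_map]
    exact smulSub_mono _ ih

lemma radPow_map_surj {M N : Type} [AddCommGroup M] [Module A M] [AddCommGroup N] [Module A N]
    (f : M →ₗ[A] N) (hf : Surjective f) (j : ℕ) :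
    Submodule.map f (radPow A M j) = radPow A N j := by
  induction j with
  | zero =>
    show Submodule.map f ⊤ = ⊤
    rw [Submodule.map_top, LinearMap.range_eq_top]
    exact hf
  | succ n ih =>
    show Submodule.map f (smulSub _ _) = smulSub _ _
    rw [smulSub_map, ih]

lemma radPow_antitone {M : Type} [AddCommGroup M] [Module A M] {j l : ℕ} (h : j ≤ l) :
    radPow A M l ≤ radPow A M j := by
  induction l with
  | zero =>
    have : j = 0 := Nat.le_zero.mp h
    subst this; exact le_rfl
  | succ n ih =>
    rcases Nat.eq_or_lt_of_le h with rfl | h'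
    · exact le_rfl
    · exact le_trans (radPow_succ_le A M n) (ih (Nat.lt_succ_iff.mp h'))

lemma radPow_sup {M : Type} [AddCommGroup M] [Module A M] (j l : ℕ) :
    radPow A M j ⊔ radPow A M l = radPow A M (min j l) := by
  rcases le_total j l with h | h
  · rw [min_eq_left h, sup_eq_left.mpr (radPow_antitone h)]
  · rw [min_eq_right h, sup_eq_right.mpr (radPow_antitone h)]

lemma radPow_pi {ι : Type} [Fintype ι] [DecidableEq ι] (M : ι → Type)
    [∀ i, AddCommGroup (M i)] [∀ i, Module A (M i)] (j : ℕ) :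
    radPow A (∀ i, M i) j = Submodule.pi Set.univ (fun i => radPow A (M i) j) := by
  apply le_antisymm
  · intro x hx
    rw [Submodule.mem_pi]
    intro i _
    exact radPow_map_le (LinearMap.proj i) j ⟨x, hx, rfl⟩
  · intro x hx
    rw [Submodule.mem_pi] at hx
    rw [← Finset.univ_sum_single x]
    apply Submodule.sum_mem
    intro i _
    exact radPow_map_le (LinearMap.single A M i) j ⟨x i, hx i (Set.mem_univ i), rfl⟩

lemma radPow_prod {M N : Type} [AddCommGroup M] [Module A M] [AddCommGroup N] [Module A N]
    (j : ℕ) : radPow A (M × N) j = (radPow A M j).prod (radPow A N j) := by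
  apply le_antisymm
  · intro x hx
    exact ⟨radPow_map_le (LinearMap.fst A M N) j ⟨x, hx, rfl⟩,
           radPow_map_le (LinearMap.snd A M N) j ⟨x, hx, rfl⟩⟩
  · rintro ⟨x, y⟩ ⟨hx, hy⟩
    have h1 : ((x, 0) : M × N) ∈ radPow A (M × N) j :=
      radPow_map_le (LinearMap.inl A M N) j ⟨x, hx, rfl⟩
    have h2 : ((0, y) : M × N) ∈ radPow A (M × N) j :=
      radPow_map_le (LinearMap.inr A M N) j ⟨y, hy, rfl⟩
    simpa using Submodule.add_mem _ h1 h2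

/-- Quotient by `radPow` along a surjection. -/
noncomputable def quotRadPowOfSurj {M N : Type} [AddCommGroup M] [Module A M]
    [AddCommGroup N] [Module A N] (f : M →ₗ[A] N) (hf : Surjective f) (j : ℕ) :
    (N ⧸ radPow A N j) ≃ₗ[A] M ⧸ (radPow A M j ⊔ LinearMap.ker f) := by
  set g : M →ₗ[A] N ⧸ radPow A N j := (radPow A N j).mkQ ∘ₗ f with hg
  have hgs : Surjective g := (Submodule.mkQ_surjective _).comp hf
  have hker : LinearMap.ker g = radPow A M j ⊔ LinearMap.ker f := by
    rw [hg, LinearMap.ker_comp, Submodule.ker_mkQ, ← radPow_map_surj f hf j,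
      Submodule.comap_map_eq]
  exact (g.quotKerEquivOfSurjective hgs).symm.trans (Submodule.quotEquivOfEq _ _ hker)

noncomputable def quotRadPowCongr {M N : Type} [AddCommGroup M] [Module A M]
    [AddCommGroup N] [Module A N] (e : M ≃ₗ[A] N) (j : ℕ) :
    (M ⧸ radPow A M j) ≃ₗ[A] N ⧸ radPow A N j :=
  (quotRadPowOfSurj (e.symm : N →ₗ[A] M) e.symm.surjective j).trans
    (Submodule.quotEquivOfEq _ _ (by rw [LinearEquiv.ker, sup_bot_eq]))

noncomputable def quotRadPowPi {ι : Type} [Fintype ι] [DecidableEq ι] (M : ι → Type)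
    [∀ i, AddCommGroup (M i)] [∀ i, Module A (M i)] (j : ℕ) :
    ((∀ i, M i) ⧸ radPow A (∀ i, M i) j) ≃ₗ[A] ∀ i, M i ⧸ radPow A (M i) j := by
  set f : (∀ i, M i) →ₗ[A] ∀ i, M i ⧸ radPow A (M i) j :=
    LinearMap.pi (fun i => (radPow A (M i) j).mkQ ∘ₗ LinearMap.proj i) with hfdef
  have hf : Surjective f := by
    intro y
    choose x hx using fun i => Submodule.mkQ_surjective (radPow A (M i) j) (y i)
    exact ⟨x, funext hx⟩
  have hker : LinearMap.ker f = radPow A (∀ i, M i) j := by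
    rw [radPow_pi]
    ext x
    simp [hfdef, LinearMap.mem_ker, LinearMap.pi_apply, Submodule.mem_pi, funext_iff,
      Submodule.Quotient.mk_eq_zero]
  exact (Submodule.quotEquivOfEq _ _ hker.symm).trans (f.quotKerEquivOfSurjective hf)

noncomputable def quotRadPowProd {M N : Type} [AddCommGroup M] [Module A M]
    [AddCommGroup N] [Module A N] (j : ℕ) :
    ((M × N) ⧸ radPow A (M × N) j) ≃ₗ[A] (M ⧸ radPow A M j) × (N ⧸ radPow A N j) := by
  set f : (M × N) →ₗ[A] (M ⧸ radPow A M j) × (N ⧸ radPow A N j) :=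
    LinearMap.prodMap (radPow A M j).mkQ (radPow A N j).mkQ with hfdef
  have hf : Surjective f :=
    (Submodule.mkQ_surjective _).prodMap (Submodule.mkQ_surjective _)
  have hker : LinearMap.ker f = radPow A (M × N) j := by
    rw [radPow_prod, hfdef, LinearMap.ker_prodMap, Submodule.ker_mkQ, Submodule.ker_mkQ]
  exact (Submodule.quotEquivOfEq _ _ hker.symm).trans (f.quotKerEquivOfSurjective hf)

/-- `(A/J^l)/(A/J^l)J^j ≃ A/J^(min j l)`. -/
noncomputable def quotFactor (l j : ℕ) :
    ((A ⧸ radPow A A l) ⧸ radPow A (A ⧸ radPow A A l) j) ≃ₗ[A] A ⧸ radPow A A (min j l) :=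
  (quotRadPowOfSurj (radPow A A l).mkQ (Submodule.mkQ_surjective _) j).trans
    (Submodule.quotEquivOfEq _ _ (by rw [Submodule.ker_mkQ, radPow_sup]))

section InAddLemmas

variable (M : Type) [AddCommGroup M] [Module A M]

lemma InAdd.ofEquiv {X X' : Type} [AddCommGroup X] [Module A X] [AddCommGroup X'] [Module A X']
    (h : InAdd A M X) (e : X ≃ₗ[A] X') : InAdd A M X' := by
  obtain ⟨n, Y, _, _, ⟨f⟩⟩ := h
  exact ⟨n, Y, _, _, ⟨(e.symm.prodCongr (LinearEquiv.refl A Y)).trans f⟩⟩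

lemma InAdd.prodMul {X Z : Type} [AddCommGroup X] [Module A X] [AddCommGroup Z] [Module A Z]
    (hX : InAdd A M X) (hZ : InAdd A M Z) : InAdd A M (X × Z) := by
  obtain ⟨n, Y, _, _, ⟨f⟩⟩ := hX
  obtain ⟨k, W, _, _, ⟨g⟩⟩ := hZ
  refine ⟨n + k, Y × W, inferInstance, inferInstance, ⟨?_⟩⟩
  exact ((LinearEquiv.prodProdProdComm A X Z Y W).trans (f.prodCongr g)).trans
    (((LinearEquiv.sumArrowLequivProdArrow (Fin n) (Fin k) A M).symm).trans
      (LinearEquiv.funCongrLeft A M finSumFinEquiv.symm))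

lemma InAdd.summandLeft {X Y Z : Type} [AddCommGroup X] [Module A X] [AddCommGroup Y]
    [Module A Y] [AddCommGroup Z] [Module A Z] (e : (X × Y) ≃ₗ[A] Z) (h : InAdd A M Z) :
    InAdd A M X := by
  obtain ⟨n, W, _, _, ⟨f⟩⟩ := h
  exact ⟨n, Y × W, inferInstance, inferInstance,
    ⟨(LinearEquiv.prodAssoc A X Y W).symm.trans ((e.prodCongr (LinearEquiv.refl A W)).trans f)⟩⟩

/-- dependent `piFinSucc` as a linear equivalence -/
def piSuccLequiv {k : ℕ} (X : Fin (k + 1) → Type) [∀ i, AddCommGroup (X i)]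
    [∀ i, Module A (X i)] : (∀ i, X i) ≃ₗ[A] X 0 × ∀ i : Fin k, X i.succ where
  toFun f := (f 0, fun i => f i.succ)
  invFun p := Fin.cons p.1 p.2
  map_add' _ _ := rfl
  map_smul' _ _ := rfl
  left_inv f := by
    funext i
    refine Fin.cases ?_ (fun j => ?_) i
    · simp
    · simp
  right_inv p := by
    refine Prod.ext ?_ (funext fun i => ?_)
    · simp
    · simp

lemma InAdd.pi : ∀ {k : ℕ} (X : Fin k → Type) (_ : ∀ i, AddCommGroup (X i))
    (_ : ∀ i, Module A (X i)), (∀ i, InAdd A M (X i)) → InAdd A M (∀ i, X i) := by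
  intro k
  induction k with
  | zero =>
    intro X _ _ _
    refine ⟨0, PUnit, inferInstance, inferInstance, ⟨?_⟩⟩
    exact LinearEquiv.ofLinear 0 0 (LinearMap.ext fun x => Subsingleton.elim _ _)
      (LinearMap.ext fun x => Subsingleton.elim _ _)
  | succ k ih =>
    intro X _ _ h
    exact InAdd.ofEquiv M
      ((h 0).prodMul M (ih (fun i => X i.succ) _ _ (fun i => h i.succ)))
      (piSuccLequiv X).symm

end InAddLemmas

/-- `Equiv.piSplitAt` as a linear equivalence. -/
def piSplitAtLequiv {ι : Type} [DecidableEq ι] (i0 : ι) (X : ι → Type)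
    [∀ i, AddCommGroup (X i)] [∀ i, Module A (X i)] :
    (∀ i, X i) ≃ₗ[A] X i0 × ∀ i : { i // i ≠ i0 }, X i :=
  { Equiv.piSplitAt i0 X with
    map_add' := fun _ _ => rfl
    map_smul' := fun _ _ => rfl }

lemma InAdd_ADR_quot (m k : ℕ) (hk1 : 1 ≤ k) (hkm : k ≤ m) :
    InAdd A (ADRModule A m) (A ⧸ radPow A A k) := by
  set i0 : Fin m := ⟨k - 1, by omega⟩ with hi0
  have hk : (i0 : ℕ) + 1 = k := by simp [hi0]; omega
  have split := (piSplitAtLequiv (A := A) i0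
    (fun i : Fin m => A ⧸ radPow A A ((i : ℕ) + 1))).symm
  refine ⟨1, ∀ i : { i : Fin m // i ≠ i0 }, A ⧸ radPow A A (((i : Fin m) : ℕ) + 1),
    inferInstance, inferInstance, ⟨?_⟩⟩
  have efac : (A ⧸ radPow A A ((i0 : ℕ) + 1)) ≃ₗ[A] (A ⧸ radPow A A k) :=
    Submodule.quotEquivOfEq _ _ (by rw [hk])
  exact ((efac.symm.prodCongr (LinearEquiv.refl A _)).trans split).trans
    (LinearEquiv.funUnique (Fin 1) A (ADRModule A m)).symm

end AuxStmt3

/-- if the radical of every (finitely generated) projective `P` lies in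
`add(⊕_{j=1}^m A/J^j)`, then so does every `PJ/(PJ)J^j` for `1 ≤ j ≤ m`. -/
theorem stmt3 (K : Type) [Field K] (A : Type) [Ring A] [Algebra K A] [FiniteDimensional K A]
    (m : ℕ) (hm : 1 ≤ m) (hA : radPow A A m = ⊥) (hA' : radPow A A (m - 1) ≠ ⊥)
    (h : ∀ (P : Type) [AddCommGroup P] [Module A P], Module.Projective A P →
      Module.Finite A P → InAdd A (ADRModule A m) ↥(radPow A P 1)) :
    ∀ (P : Type) [AddCommGroup P] [Module A P], Module.Projective A P → Module.Finite A P →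
      ∀ j : ℕ, 1 ≤ j → j ≤ m →
        InAdd A (ADRModule A m) (↥(radPow A P 1) ⧸ radPow A (↥(radPow A P 1)) j) := by
  intro P _ _ hproj hfin j hj1 hjm
  obtain ⟨n, Y, _, _, ⟨e⟩⟩ := h P hproj hfin
  set X : Type := ↥(radPow A P 1) with hX
  -- the target family of factors
  have hT : InAdd A (ADRModule A m) (∀ l : Fin m, A ⧸ radPow A A (min j ((l : ℕ) + 1))) := by
    refine InAdd.pi (ADRModule A m) _ _ _ (fun l => ?_)
    exact InAdd_ADR_quot m _ (le_min hj1 (Nat.succ_le_succ (Nat.zero_le _)))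
      (le_trans (min_le_left _ _) hjm)
  have hTn : InAdd A (ADRModule A m)
      (Fin n → ∀ l : Fin m, A ⧸ radPow A A (min j ((l : ℕ) + 1))) :=
    InAdd.pi (ADRModule A m) _ _ _ (fun _ => hT)
  -- the big module (X × Y)/(X × Y)J^j is isomorphic to the target
  have eADR : (ADRModule A m ⧸ radPow A (ADRModule A m) j) ≃ₗ[A]
      ∀ l : Fin m, A ⧸ radPow A A (min j ((l : ℕ) + 1)) :=
    (quotRadPowPi (fun l : Fin m => A ⧸ radPow A A ((l : ℕ) + 1)) j).trans
      (LinearEquiv.piCongrRight (fun l => quotFactor ((l : ℕ) + 1) j))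
  have ebig : ((X × Y) ⧸ radPow A (X × Y) j) ≃ₗ[A]
      (Fin n → ∀ l : Fin m, A ⧸ radPow A A (min j ((l : ℕ) + 1))) :=
    ((quotRadPowCongr e j).trans
      (quotRadPowPi (fun _ : Fin n => ADRModule A m) j)).trans
      (LinearEquiv.piCongrRight (fun _ => eADR))
  have hbig : InAdd A (ADRModule A m) ((X × Y) ⧸ radPow A (X × Y) j) :=
    InAdd.ofEquiv _ hTn ebig.symm
  exact InAdd.summandLeft _ (quotRadPowProd j).symm hbig
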